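/- For all bounded functions u : H → ℝ and all s, t ≥ 0, the sup-convolution operators satisfy Ť_t (Ť_s u) = Ť_{t+s} u, where Ť_t u(x) = sup_y (u(y) - ‖y - x‖²/t). -/

import Mathlib

noncomputable def supConv {H : Type*} [NormedAddCommGroup H] [InnerProductSpace ℝ H]
    (t : ℝ) (u : H → ℝ) (x : H) : ℝ :=
  if t = 0 then u x else ⨆ y : H, (u y - ‖y - x‖ ^ 2 / t)

theorem supConv_semigroup {H : Type*} [NormedAddCommGroup H] [InnerProductSpace ℝ H]
    (u : H → ℝ) (hu : ∃ C : ℝ, ∀ x, |u x| ≤ C)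
    (s t : ℝ) (hs : 0 ≤ s) (ht : 0 ≤ t) :
    supConv t (supConv s u) = supConv (t + s) u := by
  obtain ⟨C, hC⟩ := hu
  rcases eq_or_lt_of_le ht with rfl | ht'
  · rw [zero_add]
    funext x
    simp [supConv]
  rcases eq_or_lt_of_le hs with rfl | hs'
  · have h0 : supConv 0 u = u := by funext x; simp [supConv]
    rw [h0, add_zero]
  have hts : 0 < t + s := by linarith
  have key : ∀ a b : H, ‖a + b‖ ^ 2 / (t + s) ≤ ‖a‖ ^ 2 / s + ‖b‖ ^ 2 / t := by
    intro a b
    have h2 : ‖a + b‖ ^ 2 ≤ (‖a‖ + ‖b‖) ^ 2 :=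
      pow_le_pow_left₀ (norm_nonneg _) (norm_add_le a b) 2
    have h5 : ‖a‖ ^ 2 / s + ‖b‖ ^ 2 / t = (t * ‖a‖ ^ 2 + s * ‖b‖ ^ 2) / (s * t) := by
      field_simp
    rw [h5, div_le_div_iff₀ hts (by positivity)]
    nlinarith [sq_nonneg (t * ‖a‖ - s * ‖b‖), norm_nonneg a, norm_nonneg b,
      mul_nonneg (norm_nonneg a) (norm_nonneg b),
      mul_le_mul_of_nonneg_right h2 (le_of_lt (mul_pos hs' ht'))]
  have bddS : ∀ y : H, BddAbove (Set.range fun z : H => u z - ‖z - y‖ ^ 2 / s) := by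
    intro y
    refine ⟨C, ?_⟩
    rintro _ ⟨z, rfl⟩
    have h1 : 0 ≤ ‖z - y‖ ^ 2 / s := by positivity
    have h2 := (abs_le.mp (hC z)).2
    simp only
    linarith
  have vle : ∀ y : H, (⨆ z : H, u z - ‖z - y‖ ^ 2 / s) ≤ C := by
    intro y
    apply ciSup_le
    intro z
    have h1 : 0 ≤ ‖z - y‖ ^ 2 / s := by positivity
    have h2 := (abs_le.mp (hC z)).2
    linarith
  funext x
  have bddTS : BddAbove (Set.range fun z : H => u z - ‖z - x‖ ^ 2 / (t + s)) := by
    refine ⟨C, ?_⟩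
    rintro _ ⟨z, rfl⟩
    have h1 : 0 ≤ ‖z - x‖ ^ 2 / (t + s) := by positivity
    have h2 := (abs_le.mp (hC z)).2
    simp only
    linarith
  have bddOuter : BddAbove (Set.range fun y : H =>
      (⨆ z : H, u z - ‖z - y‖ ^ 2 / s) - ‖y - x‖ ^ 2 / t) := by
    refine ⟨C, ?_⟩
    rintro _ ⟨y, rfl⟩
    have h1 : 0 ≤ ‖y - x‖ ^ 2 / t := by positivity
    have h2 := vle y
    simp only
    linarith
  simp only [supConv, if_neg hs'.ne', if_neg ht'.ne', if_neg hts.ne']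
  apply le_antisymm
  · apply ciSup_le
    intro y
    rw [sub_le_iff_le_add]
    apply ciSup_le
    intro z
    have h1 : u z - ‖z - x‖ ^ 2 / (t + s) ≤ ⨆ w : H, u w - ‖w - x‖ ^ 2 / (t + s) :=
      le_ciSup bddTS z
    have hk := key (z - y) (y - x)
    rw [sub_add_sub_cancel] at hk
    linarith
  · apply ciSup_le
    intro z
    have h1 : s / (t + s) + t / (t + s) = 1 := by field_simp; ring
    set y : H := (s / (t + s)) • x + (t / (t + s)) • z with hy
    have hzy : z - y = (s / (t + s)) • (z - x) := by
      rw [hy]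
      match_scalars <;> field_simp <;> ring
    have hyx : y - x = (t / (t + s)) • (z - x) := by
      rw [hy]
      match_scalars <;> field_simp <;> ring
    have e1 : ‖z - y‖ ^ 2 / s + ‖y - x‖ ^ 2 / t = ‖z - x‖ ^ 2 / (t + s) := by
      rw [hzy, hyx, norm_smul, norm_smul, Real.norm_eq_abs, Real.norm_eq_abs,
        abs_of_nonneg (div_nonneg hs'.le hts.le), abs_of_nonneg (div_nonneg ht'.le hts.le)]
      field_simp
      ring
    calc u z - ‖z - x‖ ^ 2 / (t + s)
        = (u z - ‖z - y‖ ^ 2 / s) - ‖y - x‖ ^ 2 / t := by rw [← e1]; ring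
      _ ≤ (⨆ w : H, u w - ‖w - y‖ ^ 2 / s) - ‖y - x‖ ^ 2 / t := by
          have := le_ciSup (bddS y) z
          linarith
      _ ≤ ⨆ y' : H, (⨆ w : H, u w - ‖w - y'‖ ^ 2 / s) - ‖y' - x‖ ^ 2 / t :=
          le_ciSup bddOuter y
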